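/- Let α_i, β_i ∈ ℝ³ be linearly independent and let α̂, β̂ ∈ ℝ³ be linearly independent. Define R̃ᵀ as the matrix with columns (α̂/‖α_i‖, (α̂ × β̂)/‖α_i × β_i‖, (α̂ × (α̂ × β̂))/‖α_i × (α_i × β_i)‖) times R_iᵀ, and R̂ᵀ as the matrix with columns (α̂/‖α̂‖, (α̂ × β̂)/‖α̂ × β̂‖, (α̂ × (α̂ × β̂))/‖α̂ × (α̂ × β̂)‖) times R_iᵀ. Then R̂ is a special orthogonal matrix, and R̃ᵀ = R̂ᵀ · S where S := R_i · diag(‖α̂‖/‖α_i‖, ‖α̂ × β̂‖/‖α_i × β_i‖, ‖α̂ × (α̂ × β̂)‖/‖α_i × (α_i × β_i)‖) · R_iᵀ is symmetric positive semidefinite and satisfies S · S = R̃ R̃ᵀ (i.e., R̃ᵀ = R̂ᵀ (R̃ R̃ᵀ)^{1/2} is the polar decomposition of R̃ᵀ). -/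

import Mathlib

open scoped RealInnerProductSpace
open Matrix Filter

noncomputable section

/-- ℝ³ with the Euclidean norm and inner product. -/
abbrev V3 : Type := EuclideanSpace ℝ (Fin 3)

/-- Identity identification of `V3` with plain functions `Fin 3 → ℝ`. -/
def toF (v : V3) : Fin 3 → ℝ := v

/-- Identity identification of plain functions `Fin 3 → ℝ` with `V3`. -/
def toE (v : Fin 3 → ℝ) : V3 := WithLp.toLp 2 v

/-- The cross product on ℝ³. -/
def cross (v w : V3) : V3 := toE (crossProduct (toF v) (toF w))

/-- The 3×3 matrix whose columns are `v1, v2, v3`. -/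
def colMat (v1 v2 v3 : V3) : Matrix (Fin 3) (Fin 3) ℝ :=
  Matrix.of fun i j => toF (![v1, v2, v3] j) i

/-- The matrix `R_i` with columns
`αi/‖αi‖, (αi × βi)/‖αi × βi‖, (αi × (αi × βi))/‖αi × (αi × βi)‖`. -/
def Rimat (αi βi : V3) : Matrix (Fin 3) (Fin 3) ℝ :=
  colMat ((1 / ‖αi‖) • αi) ((1 / ‖cross αi βi‖) • cross αi βi)
    ((1 / ‖cross αi (cross αi βi)‖) • cross αi (cross αi βi))

/-- The matrix `R̃ᵀ` built from the estimates `α̂, β̂`. -/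
def RtildeT (αi βi ahat bhat : V3) : Matrix (Fin 3) (Fin 3) ℝ :=
  colMat ((1 / ‖αi‖) • ahat) ((1 / ‖cross αi βi‖) • cross ahat bhat)
      ((1 / ‖cross αi (cross αi βi)‖) • cross ahat (cross ahat bhat))
    * (Rimat αi βi)ᵀ

/-- The matrix `R̂ᵀ` built from the estimates `α̂, β̂`. -/
def RhatT (αi βi ahat bhat : V3) : Matrix (Fin 3) (Fin 3) ℝ :=
  colMat ((1 / ‖ahat‖) • ahat) ((1 / ‖cross ahat bhat‖) • cross ahat bhat)
      ((1 / ‖cross ahat (cross ahat bhat)‖) • cross ahat (cross ahat bhat))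
    * (Rimat αi βi)ᵀ

lemma toF_smul (c : ℝ) (v : V3) : toF (c • v) = c • toF v := rfl
lemma toF_cross (v w : V3) : toF (cross v w) = crossProduct (toF v) (toF w) := rfl

lemma dotSelf (v : V3) : toF v ⬝ᵥ toF v = ‖v‖ ^ 2 := by
  rw [EuclideanSpace.norm_eq, Real.sq_sqrt (by positivity)]
  simp [dotProduct, toF, sq]

lemma indep_toF {α β : V3} (h : LinearIndependent ℝ ![α, β]) :
    LinearIndependent ℝ ![toF α, toF β] := by
  have := h.map' (WithLp.linearEquiv 2 ℝ (Fin 3 → ℝ)).toLinearMap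
    (WithLp.linearEquiv 2 ℝ (Fin 3 → ℝ)).ker
  have e : ⇑(WithLp.linearEquiv 2 ℝ (Fin 3 → ℝ)).toLinearMap ∘ ![α, β] = ![toF α, toF β] := by
    funext i; fin_cases i <;> rfl
  rw [e] at this
  exact this

lemma cross_nz {α β : V3} (h : LinearIndependent ℝ ![α, β]) :
    α ≠ 0 ∧ cross α β ≠ 0 ∧ cross α (cross α β) ≠ 0 := by
  have hα : α ≠ 0 := by
    have := h.ne_zero 0; simpa using this
  have hv : crossProduct (toF α) (toF β) ≠ 0 :=
    crossProduct_ne_zero_iff_linearIndependent.mpr (indep_toF h)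
  have hw : crossProduct (toF α) (crossProduct (toF α) (toF β)) ≠ 0 := by
    set a := toF α; set v := crossProduct a (toF β)
    intro h0
    have h1 : crossProduct a v ⬝ᵥ crossProduct a v = 0 := by rw [h0]; simp
    rw [cross_dot_cross] at h1
    have ha0 : a ⬝ᵥ v = 0 := dot_self_cross a (toF β)
    have hva : v ⬝ᵥ a = 0 := by rwa [dotProduct_comm]
    rw [ha0, hva] at h1
    have h2 : a ⬝ᵥ a ≠ 0 := by
      rw [show a = toF α from rfl, dotSelf]
      exact pow_ne_zero _ (norm_ne_zero_iff.mpr hα)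
    have h3 : v ⬝ᵥ v ≠ 0 := by
      rw [show v = toF (cross α β) from rfl, dotSelf]
      have hne : cross α β ≠ 0 := fun hz => hv (congrArg toF hz)
      exact pow_ne_zero _ (norm_ne_zero_iff.mpr hne)
    have h4 : a ⬝ᵥ a * (v ⬝ᵥ v) = 0 := by linarith
    rcases mul_eq_zero.mp h4 with h1 | h1
    · exact h2 h1
    · exact h3 h1
  refine ⟨hα, fun hz => hv (congrArg toF hz), fun hz => hw (congrArg toF hz)⟩

lemma colMatT_mul (v1 v2 v3 w1 w2 w3 : V3) (i j : Fin 3) :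
    ((colMat v1 v2 v3)ᵀ * colMat w1 w2 w3) i j
      = toF (![v1, v2, v3] i) ⬝ᵥ toF (![w1, w2, w3] j) := by
  simp [Matrix.mul_apply, colMat, dotProduct]
lemma Rimat_orth {α β : V3} (h : LinearIndependent ℝ ![α, β]) :
    (Rimat α β)ᵀ * Rimat α β = 1 := by
  obtain ⟨hα, hv, hw⟩ := cross_nz h
  have nα : ‖α‖ ≠ 0 := norm_ne_zero_iff.mpr hα
  have nv : ‖cross α β‖ ≠ 0 := norm_ne_zero_iff.mpr hv
  have nw : ‖cross α (cross α β)‖ ≠ 0 := norm_ne_zero_iff.mpr hw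
  have d_av : toF α ⬝ᵥ toF (cross α β) = 0 := dot_self_cross _ _
  have d_aw : toF α ⬝ᵥ toF (cross α (cross α β)) = 0 := dot_self_cross _ _
  have d_vw : toF (cross α β) ⬝ᵥ toF (cross α (cross α β)) = 0 := dot_cross_self _ _
  have d_va : toF (cross α β) ⬝ᵥ toF α = 0 := by rwa [dotProduct_comm]
  have d_wa : toF (cross α (cross α β)) ⬝ᵥ toF α = 0 := by rwa [dotProduct_comm]
  have d_wv : toF (cross α (cross α β)) ⬝ᵥ toF (cross α β) = 0 := by
    rwa [dotProduct_comm]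
  ext i j
  rw [Rimat, colMatT_mul]
  fin_cases i <;> fin_cases j <;>
    simp only [Fin.mk_zero, Fin.mk_one, show (⟨2, by norm_num⟩ : Fin 3) = 2 from rfl,
      Matrix.cons_val_zero, Matrix.cons_val_one, Matrix.head_cons,
      Matrix.cons_val_two, Matrix.tail_cons, toF_smul, smul_dotProduct,
      dotProduct_smul, smul_eq_mul, d_av, d_aw, d_vw, d_va, d_wa, d_wv,
      dotSelf, Matrix.one_apply, mul_zero, zero_mul] <;>
    (try norm_num) <;> (try field_simp) <;> (try ring) <;> (try simp)

lemma Rimat_det {α β : V3} (h : LinearIndependent ℝ ![α, β]) :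
    (Rimat α β).det = 1 := by
  obtain ⟨hα, hv, hw⟩ := cross_nz h
  have nα : 0 < ‖α‖ := norm_pos_iff.mpr hα
  have nv : 0 < ‖cross α β‖ := norm_pos_iff.mpr hv
  have nw : 0 < ‖cross α (cross α β)‖ := norm_pos_iff.mpr hw
  have hsq : (Rimat α β).det ^ 2 = 1 := by
    have h2 := congrArg Matrix.det (Rimat_orth h)
    rwa [Matrix.det_mul, Matrix.det_transpose, Matrix.det_one, ← pow_two] at h2
  have hrows : (Rimat α β)ᵀ = Matrix.of
      ![toF ((1 / ‖α‖) • α), toF ((1 / ‖cross α β‖) • cross α β),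
        toF ((1 / ‖cross α (cross α β)‖) • cross α (cross α β))] := by
    ext i j
    fin_cases i <;> rfl
  have hpos : 0 < (Rimat α β).det := by
    rw [← Matrix.det_transpose, hrows]
    show 0 < Matrix.det ![toF ((1 / ‖α‖) • α), toF ((1 / ‖cross α β‖) • cross α β),
        toF ((1 / ‖cross α (cross α β)‖) • cross α (cross α β))]
    rw [← triple_product_eq_det]
    have e1 : toF ((1 / ‖α‖) • α) ⬝ᵥ
        (crossProduct (toF ((1 / ‖cross α β‖) • cross α β)))
          (toF ((1 / ‖cross α (cross α β)‖) • cross α (cross α β)))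
        = (1 / ‖α‖) * ((1 / ‖cross α β‖) * ((1 / ‖cross α (cross α β)‖) *
            (toF α ⬝ᵥ (crossProduct (toF (cross α β))) (toF (cross α (cross α β)))))) := by
      simp [toF_smul, _root_.map_smul, LinearMap.smul_apply, smul_dotProduct,
        dotProduct_smul, smul_eq_mul]
      ring
    rw [e1, triple_product_permutation, triple_product_permutation]
    have e2 : (crossProduct (toF α)) (toF (cross α β)) = toF (cross α (cross α β)) := rfl
    rw [e2, dotSelf]
    positivity
  nlinarith [hsq, hpos]

lemma colMat_mul_diagonal (u1 u2 u3 : V3) (d : Fin 3 → ℝ) :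
    colMat u1 u2 u3 * Matrix.diagonal d = colMat (d 0 • u1) (d 1 • u2) (d 2 • u3) := by
  ext i j
  rw [Matrix.mul_diagonal]
  fin_cases j <;> simp [colMat, toF_smul, mul_comm]

/-- Polar decomposition of `R̃ᵀ`: `R̂` is special orthogonal, `R̃ᵀ = R̂ᵀ S` with
`S` symmetric positive semidefinite and `S² = R̃ R̃ᵀ`. -/
theorem Rtilde_polar_decomposition
    (αi βi : V3) (hind : LinearIndependent ℝ ![αi, βi])
    (ahat bhat : V3) (hindhat : LinearIndependent ℝ ![ahat, bhat]) :
    ((RhatT αi βi ahat bhat)ᵀ)ᵀ * (RhatT αi βi ahat bhat)ᵀ = 1 ∧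
    ((RhatT αi βi ahat bhat)ᵀ).det = 1 ∧
    RtildeT αi βi ahat bhat
      = RhatT αi βi ahat bhat
          * (Rimat αi βi
              * Matrix.diagonal
                  ![‖ahat‖ / ‖αi‖,
                    ‖cross ahat bhat‖ / ‖cross αi βi‖,
                    ‖cross ahat (cross ahat bhat)‖ / ‖cross αi (cross αi βi)‖]
              * (Rimat αi βi)ᵀ) ∧
    (Rimat αi βi
        * Matrix.diagonal
            ![‖ahat‖ / ‖αi‖,
              ‖cross ahat bhat‖ / ‖cross αi βi‖,
              ‖cross ahat (cross ahat bhat)‖ / ‖cross αi (cross αi βi)‖]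
        * (Rimat αi βi)ᵀ).PosSemidef ∧
    (Rimat αi βi
        * Matrix.diagonal
            ![‖ahat‖ / ‖αi‖,
              ‖cross ahat bhat‖ / ‖cross αi βi‖,
              ‖cross ahat (cross ahat bhat)‖ / ‖cross αi (cross αi βi)‖]
        * (Rimat αi βi)ᵀ)
      * (Rimat αi βi
          * Matrix.diagonal
              ![‖ahat‖ / ‖αi‖,
                ‖cross ahat bhat‖ / ‖cross αi βi‖,
                ‖cross ahat (cross ahat bhat)‖ / ‖cross αi (cross αi βi)‖]
          * (Rimat αi βi)ᵀ)
      = (RtildeT αi βi ahat bhat)ᵀ * RtildeT αi βi ahat bhat := by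
  obtain ⟨ha, hab, habb⟩ := cross_nz hindhat
  obtain ⟨hia, hiab, hiabb⟩ := cross_nz hind
  set Ri := Rimat αi βi with hRidef
  set Rh := Rimat ahat bhat with hRhdef
  have hRi : Riᵀ * Ri = 1 := Rimat_orth hind
  have hRh : Rhᵀ * Rh = 1 := Rimat_orth hindhat
  have hRi' : Ri * Riᵀ = 1 := mul_eq_one_comm.mp hRi
  have hRh' : Rh * Rhᵀ = 1 := mul_eq_one_comm.mp hRh
  have cRi : ∀ X : Matrix (Fin 3) (Fin 3) ℝ, Riᵀ * (Ri * X) = X := fun X => by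
    rw [← Matrix.mul_assoc, hRi, Matrix.one_mul]
  have cRi' : ∀ X : Matrix (Fin 3) (Fin 3) ℝ, Ri * (Riᵀ * X) = X := fun X => by
    rw [← Matrix.mul_assoc, hRi', Matrix.one_mul]
  have cRh : ∀ X : Matrix (Fin 3) (Fin 3) ℝ, Rhᵀ * (Rh * X) = X := fun X => by
    rw [← Matrix.mul_assoc, hRh, Matrix.one_mul]
  set dvec : Fin 3 → ℝ :=
    ![‖ahat‖ / ‖αi‖, ‖cross ahat bhat‖ / ‖cross αi βi‖,
      ‖cross ahat (cross ahat bhat)‖ / ‖cross αi (cross αi βi)‖] with hdvec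
  have hRhatT : RhatT αi βi ahat bhat = Rh * Riᵀ := rfl
  have hRtilde : RtildeT αi βi ahat bhat = Rh * Matrix.diagonal dvec * Riᵀ := by
    rw [RtildeT]
    congr 1
    rw [hRhdef, Rimat, colMat_mul_diagonal]
    have h₁ : dvec 0 • ((1 / ‖ahat‖ : ℝ) • ahat) = (1 / ‖αi‖ : ℝ) • ahat := by
      rw [smul_smul]
      congr 1
      have h0 : dvec 0 = ‖ahat‖ / ‖αi‖ := rfl
      have h1 : ‖ahat‖ ≠ 0 := norm_ne_zero_iff.mpr ha
      have h2 : ‖αi‖ ≠ 0 := norm_ne_zero_iff.mpr hia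
      rw [h0]; field_simp
    have h₂ : dvec 1 • ((1 / ‖cross ahat bhat‖ : ℝ) • cross ahat bhat)
        = (1 / ‖cross αi βi‖ : ℝ) • cross ahat bhat := by
      rw [smul_smul]
      congr 1
      have h0 : dvec 1 = ‖cross ahat bhat‖ / ‖cross αi βi‖ := rfl
      have h1 : ‖cross ahat bhat‖ ≠ 0 := norm_ne_zero_iff.mpr hab
      have h2 : ‖cross αi βi‖ ≠ 0 := norm_ne_zero_iff.mpr hiab
      rw [h0]; field_simp
    have h₃ : dvec 2 • ((1 / ‖cross ahat (cross ahat bhat)‖ : ℝ) • cross ahat (cross ahat bhat))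
        = (1 / ‖cross αi (cross αi βi)‖ : ℝ) • cross ahat (cross ahat bhat) := by
      rw [smul_smul]
      congr 1
      have h0 : dvec 2 = ‖cross ahat (cross ahat bhat)‖ / ‖cross αi (cross αi βi)‖ := rfl
      have h1 : ‖cross ahat (cross ahat bhat)‖ ≠ 0 := norm_ne_zero_iff.mpr habb
      have h2 : ‖cross αi (cross αi βi)‖ ≠ 0 := norm_ne_zero_iff.mpr hiabb
      rw [h0]; field_simp
    rw [h₁, h₂, h₃]
  refine ⟨?_, ?_, ?_, ?_, ?_⟩
  · rw [Matrix.transpose_transpose, hRhatT, Matrix.transpose_mul,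
      Matrix.transpose_transpose, Matrix.mul_assoc, cRi]
    exact hRh'
  · rw [Matrix.det_transpose, hRhatT, Matrix.det_mul, Matrix.det_transpose,
      Rimat_det hindhat, Rimat_det hind, mul_one]
  · rw [hRtilde, hRhatT]
    simp only [Matrix.mul_assoc, cRi]
  · have hd : 0 ≤ dvec := by
      intro i
      fin_cases i
      · show (0:ℝ) ≤ ‖ahat‖ / ‖αi‖
        positivity
      · show (0:ℝ) ≤ ‖cross ahat bhat‖ / ‖cross αi βi‖
        positivity
      · show (0:ℝ) ≤ ‖cross ahat (cross ahat bhat)‖ / ‖cross αi (cross αi βi)‖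
        positivity
    have hps := (Matrix.PosSemidef.diagonal hd).mul_mul_conjTranspose_same Ri
    rwa [Matrix.conjTranspose_eq_transpose_of_trivial] at hps
  · rw [hRtilde]
    simp only [Matrix.transpose_mul, Matrix.transpose_transpose,
      Matrix.diagonal_transpose, Matrix.mul_assoc, cRi, cRi', cRh]
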